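/- For a fourth order biquadratic tensor T ∈ ℝ^{d1×d2×d1×d2}, the map T ↦ max{ |⟨T, x⊗y⊗x⊗y⟩| : ‖x‖ = ‖y‖ = 1 } defines a norm on the space of biquadratic tensors of size d1×d2×d1×d2. -/
import Mathlib


noncomputable section

/-- A fourth order tensor `T` of size `d1 × d2 × d1 × d2` is biquadratic. -/
def Biquadratic {d1 d2 : ℕ} (T : Fin d1 → Fin d2 → Fin d1 → Fin d2 → ℝ) : Prop :=
  ∀ i j p q, T i j p q = T p j i q ∧ T i j p q = T p q i j

/-- `⟨T, x ⊗ y ⊗ x ⊗ y⟩`. -/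
def bform {d1 d2 : ℕ} (T : Fin d1 → Fin d2 → Fin d1 → Fin d2 → ℝ)
    (x : Fin d1 → ℝ) (y : Fin d2 → ℝ) : ℝ :=
  ∑ i, ∑ j, ∑ p, ∑ q, T i j p q * x i * y j * x p * y q

/-- The spectral norm of a fourth order tensor. -/
noncomputable def bSpec {d1 d2 : ℕ} (T : Fin d1 → Fin d2 → Fin d1 → Fin d2 → ℝ) : ℝ :=
  sSup { r : ℝ | ∃ x : Fin d1 → ℝ, ∃ y : Fin d2 → ℝ,
    (∑ i, x i ^ 2 = 1) ∧ (∑ j, y j ^ 2 = 1) ∧ r = |bform T x y| }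

namespace BqAux

variable {d1 d2 : ℕ}

/-- The set whose supremum is `bSpec`. -/
def bS (T : Fin d1 → Fin d2 → Fin d1 → Fin d2 → ℝ) : Set ℝ :=
  { r : ℝ | ∃ x : Fin d1 → ℝ, ∃ y : Fin d2 → ℝ,
    (∑ i, x i ^ 2 = 1) ∧ (∑ j, y j ^ 2 = 1) ∧ r = |bform T x y| }

lemma bSpec_eq (T : Fin d1 → Fin d2 → Fin d1 → Fin d2 → ℝ) : bSpec T = sSup (bS T) := rfl

lemma mem_nonneg {T : Fin d1 → Fin d2 → Fin d1 → Fin d2 → ℝ} {r : ℝ} (h : r ∈ bS T) :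
    0 ≤ r := by
  obtain ⟨x, y, _, _, rfl⟩ := h
  positivity

lemma sum_single_sq {d : ℕ} (a : Fin d) : ∑ i, (Pi.single a 1 : Fin d → ℝ) i ^ 2 = 1 := by
  simp [Pi.single_apply, apply_ite (fun t : ℝ => t ^ 2)]

lemma bS_nonempty (hd1 : 0 < d1) (hd2 : 0 < d2) (T : Fin d1 → Fin d2 → Fin d1 → Fin d2 → ℝ) :
    (bS T).Nonempty :=
  ⟨_, (Pi.single ⟨0, hd1⟩ 1 : Fin d1 → ℝ), (Pi.single ⟨0, hd2⟩ 1 : Fin d2 → ℝ),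
    sum_single_sq _, sum_single_sq _, rfl⟩

lemma abs_le_one_of_sum_sq {d : ℕ} {x : Fin d → ℝ} (hx : ∑ i, x i ^ 2 = 1) (i : Fin d) :
    |x i| ≤ 1 := by
  have h1 : x i ^ 2 ≤ 1 := by
    rw [← hx]
    exact Finset.single_le_sum (fun j _ => sq_nonneg (x j)) (Finset.mem_univ i)
  nlinarith [abs_nonneg (x i), sq_abs (x i)]

lemma bS_bddAbove (T : Fin d1 → Fin d2 → Fin d1 → Fin d2 → ℝ) : BddAbove (bS T) := by
  refine ⟨∑ i, ∑ j, ∑ p, ∑ q, |T i j p q|, fun r hr => ?_⟩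
  obtain ⟨x, y, hx, hy, rfl⟩ := hr
  have hx' := abs_le_one_of_sum_sq hx
  have hy' := abs_le_one_of_sum_sq hy
  unfold bform
  calc |∑ i, ∑ j, ∑ p, ∑ q, T i j p q * x i * y j * x p * y q|
      ≤ ∑ i, |∑ j, ∑ p, ∑ q, T i j p q * x i * y j * x p * y q| :=
        Finset.abs_sum_le_sum_abs _ _
    _ ≤ ∑ i, ∑ j, ∑ p, ∑ q, |T i j p q| := by
        refine Finset.sum_le_sum fun i _ => ?_
        calc |∑ j, ∑ p, ∑ q, T i j p q * x i * y j * x p * y q|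
            ≤ ∑ j, |∑ p, ∑ q, T i j p q * x i * y j * x p * y q| :=
              Finset.abs_sum_le_sum_abs _ _
          _ ≤ ∑ j, ∑ p, ∑ q, |T i j p q| := by
              refine Finset.sum_le_sum fun j _ => ?_
              calc |∑ p, ∑ q, T i j p q * x i * y j * x p * y q|
                  ≤ ∑ p, |∑ q, T i j p q * x i * y j * x p * y q| :=
                    Finset.abs_sum_le_sum_abs _ _
                _ ≤ ∑ p, ∑ q, |T i j p q| := by
                    refine Finset.sum_le_sum fun p _ => ?_
                    calc |∑ q, T i j p q * x i * y j * x p * y q|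
                        ≤ ∑ q, |T i j p q * x i * y j * x p * y q| :=
                          Finset.abs_sum_le_sum_abs _ _
                      _ ≤ ∑ q, |T i j p q| := by
                          refine Finset.sum_le_sum fun q _ => ?_
                          rw [abs_mul, abs_mul, abs_mul, abs_mul]
                          calc |T i j p q| * |x i| * |y j| * |x p| * |y q|
                              ≤ |T i j p q| * 1 * 1 * 1 * 1 := by
                                gcongr <;> first | exact hx' _ | exact hy' _
                            _ = |T i j p q| := by ring

lemma bSpec_nonneg (hd1 : 0 < d1) (hd2 : 0 < d2) (T : Fin d1 → Fin d2 → Fin d1 → Fin d2 → ℝ) :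
    0 ≤ bSpec T := by
  obtain ⟨r, hr⟩ := bS_nonempty hd1 hd2 T
  exact le_trans (mem_nonneg hr) (le_csSup (bS_bddAbove T) hr)

/-- Auxiliary multilinear form. -/
def G (T : Fin d1 → Fin d2 → Fin d1 → Fin d2 → ℝ)
    (x : Fin d1 → ℝ) (y : Fin d2 → ℝ) (x' : Fin d1 → ℝ) (y' : Fin d2 → ℝ) : ℝ :=
  ∑ i, ∑ p, ∑ j, ∑ q, T i j p q * x i * y j * x' p * y' q

lemma bform_eq_G (T : Fin d1 → Fin d2 → Fin d1 → Fin d2 → ℝ) (x y) :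
    bform T x y = G T x y x y := by
  unfold bform G
  exact Finset.sum_congr rfl fun i _ => Finset.sum_comm

lemma G_add1 (T : Fin d1 → Fin d2 → Fin d1 → Fin d2 → ℝ) (x x' y z w) :
    G T (x + x') y z w = G T x y z w + G T x' y z w := by
  unfold G
  simp only [← Finset.sum_add_distrib]
  refine Finset.sum_congr rfl fun i _ => Finset.sum_congr rfl fun p _ =>
    Finset.sum_congr rfl fun j _ => Finset.sum_congr rfl fun q _ => ?_
  simp only [Pi.add_apply]; ring

lemma G_add3 (T : Fin d1 → Fin d2 → Fin d1 → Fin d2 → ℝ) (x y z z' w) :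
    G T x y (z + z') w = G T x y z w + G T x y z' w := by
  unfold G
  simp only [← Finset.sum_add_distrib]
  refine Finset.sum_congr rfl fun i _ => Finset.sum_congr rfl fun p _ =>
    Finset.sum_congr rfl fun j _ => Finset.sum_congr rfl fun q _ => ?_
  simp only [Pi.add_apply]; ring

lemma G_add2 (T : Fin d1 → Fin d2 → Fin d1 → Fin d2 → ℝ) (x y y' z w) :
    G T x (y + y') z w = G T x y z w + G T x y' z w := by
  unfold G
  simp only [← Finset.sum_add_distrib]
  refine Finset.sum_congr rfl fun i _ => Finset.sum_congr rfl fun p _ =>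
    Finset.sum_congr rfl fun j _ => Finset.sum_congr rfl fun q _ => ?_
  simp only [Pi.add_apply]; ring

lemma G_add4 (T : Fin d1 → Fin d2 → Fin d1 → Fin d2 → ℝ) (x y z w w') :
    G T x y z (w + w') = G T x y z w + G T x y z w' := by
  unfold G
  simp only [← Finset.sum_add_distrib]
  refine Finset.sum_congr rfl fun i _ => Finset.sum_congr rfl fun p _ =>
    Finset.sum_congr rfl fun j _ => Finset.sum_congr rfl fun q _ => ?_
  simp only [Pi.add_apply]; ring

lemma G_swap_x {T : Fin d1 → Fin d2 → Fin d1 → Fin d2 → ℝ} (hT : Biquadratic T)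
    (x y x' y') : G T x y x' y' = G T x' y x y' := by
  unfold G
  rw [Finset.sum_comm]
  refine Finset.sum_congr rfl fun i _ => Finset.sum_congr rfl fun p _ =>
    Finset.sum_congr rfl fun j _ => Finset.sum_congr rfl fun q _ => ?_
  rw [(hT p j i q).1]; ring

lemma G_swap_y {T : Fin d1 → Fin d2 → Fin d1 → Fin d2 → ℝ} (hT : Biquadratic T)
    (x y x' y') : G T x y x' y' = G T x y' x' y := by
  unfold G
  refine Finset.sum_congr rfl fun i _ => Finset.sum_congr rfl fun p _ => ?_
  rw [Finset.sum_comm]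
  refine Finset.sum_congr rfl fun j _ => Finset.sum_congr rfl fun q _ => ?_
  have h : T i j p q = T i q p j := by
    rw [(hT i j p q).2, (hT p q i j).1]
  rw [← h]; ring

lemma G_eval_single (T : Fin d1 → Fin d2 → Fin d1 → Fin d2 → ℝ) (a : Fin d1) (b : Fin d2)
    (c : Fin d1) (e : Fin d2) :
    G T (Pi.single a 1) (Pi.single b 1) (Pi.single c 1) (Pi.single e 1) = T a b c e := by
  unfold G
  simp [Pi.single_apply, mul_ite, ite_mul, Finset.sum_ite_eq']

/-- Polarization: a biquadratic tensor with vanishing quadratic form is zero. -/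
lemma eq_zero_of_bform_eq_zero {T : Fin d1 → Fin d2 → Fin d1 → Fin d2 → ℝ}
    (hT : Biquadratic T) (H : ∀ x y, bform T x y = 0) : T = 0 := by
  have H' : ∀ x y, G T x y x y = 0 := fun x y => by rw [← bform_eq_G]; exact H x y
  have step1 : ∀ x x' y, G T x y x' y = 0 := by
    intro x x' y
    have h := H' (x + x') y
    rw [G_add1, G_add3, G_add3, H' x y, H' x' y, G_swap_x hT x' y x y] at h
    linarith
  have step2 : ∀ x y x' y', G T x y x' y' = 0 := by
    intro x y x' y'
    have h := step1 x x' (y + y')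
    rw [G_add2, G_add4, G_add4, step1 x x' y, step1 x x' y',
      G_swap_y hT x y' x' y] at h
    linarith
  funext i j p q
  have := step2 (Pi.single i 1) (Pi.single j 1) (Pi.single p 1) (Pi.single q 1)
  rw [G_eval_single] at this
  simpa using this

lemma bform_smul_x (T : Fin d1 → Fin d2 → Fin d1 → Fin d2 → ℝ) (c : ℝ) (x y) :
    bform T (c • x) y = c ^ 2 * bform T x y := by
  unfold bform
  simp only [Finset.mul_sum]
  refine Finset.sum_congr rfl fun i _ => Finset.sum_congr rfl fun j _ =>
    Finset.sum_congr rfl fun p _ => Finset.sum_congr rfl fun q _ => ?_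
  simp only [Pi.smul_apply, smul_eq_mul]; ring

lemma bform_smul_y (T : Fin d1 → Fin d2 → Fin d1 → Fin d2 → ℝ) (c : ℝ) (x y) :
    bform T x (c • y) = c ^ 2 * bform T x y := by
  unfold bform
  simp only [Finset.mul_sum]
  refine Finset.sum_congr rfl fun i _ => Finset.sum_congr rfl fun j _ =>
    Finset.sum_congr rfl fun p _ => Finset.sum_congr rfl fun q _ => ?_
  simp only [Pi.smul_apply, smul_eq_mul]; ring

lemma bform_smul_T (T : Fin d1 → Fin d2 → Fin d1 → Fin d2 → ℝ) (c : ℝ) (x y) :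
    bform (c • T) x y = c * bform T x y := by
  unfold bform
  simp only [Finset.mul_sum]
  refine Finset.sum_congr rfl fun i _ => Finset.sum_congr rfl fun j _ =>
    Finset.sum_congr rfl fun p _ => Finset.sum_congr rfl fun q _ => ?_
  simp only [Pi.smul_apply, smul_eq_mul]; ring

lemma bform_add_T (T S : Fin d1 → Fin d2 → Fin d1 → Fin d2 → ℝ) (x y) :
    bform (T + S) x y = bform T x y + bform S x y := by
  unfold bform
  simp only [← Finset.sum_add_distrib]
  refine Finset.sum_congr rfl fun i _ => Finset.sum_congr rfl fun j _ =>
    Finset.sum_congr rfl fun p _ => Finset.sum_congr rfl fun q _ => ?_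
  simp only [Pi.add_apply]; ring

lemma bform_zero_x (T : Fin d1 → Fin d2 → Fin d1 → Fin d2 → ℝ) (y) :
    bform T 0 y = 0 := by
  unfold bform
  simp

lemma bform_zero_y (T : Fin d1 → Fin d2 → Fin d1 → Fin d2 → ℝ) (x) :
    bform T x 0 = 0 := by
  unfold bform
  simp

end BqAux

open BqAux in
theorem stmt1 {d1 d2 : ℕ} (hd1 : 0 < d1) (hd2 : 0 < d2) :
    (∀ T : Fin d1 → Fin d2 → Fin d1 → Fin d2 → ℝ, Biquadratic T →
      0 ≤ bSpec T ∧ (bSpec T = 0 ↔ T = 0)) ∧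
    (∀ T : Fin d1 → Fin d2 → Fin d1 → Fin d2 → ℝ, Biquadratic T →
      ∀ c : ℝ, bSpec (c • T) = |c| * bSpec T) ∧
    (∀ T S : Fin d1 → Fin d2 → Fin d1 → Fin d2 → ℝ, Biquadratic T → Biquadratic S →
      bSpec (T + S) ≤ bSpec T + bSpec S) := by
  have key_le : ∀ T : Fin d1 → Fin d2 → Fin d1 → Fin d2 → ℝ, ∀ x y,
      (∑ i, x i ^ 2 = 1) → (∑ j, y j ^ 2 = 1) → |bform T x y| ≤ bSpec T := by
    intro T x y hx hy
    exact le_csSup (bS_bddAbove T) ⟨x, y, hx, hy, rfl⟩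
  have hzero : ∀ T : Fin d1 → Fin d2 → Fin d1 → Fin d2 → ℝ, Biquadratic T →
      bSpec T = 0 → T = 0 := by
    intro T hT h0
    refine eq_zero_of_bform_eq_zero hT ?_
    -- first: bform vanishes on unit vectors
    have Hunit : ∀ x y, (∑ i, x i ^ 2 = 1) → (∑ j, y j ^ 2 = 1) → bform T x y = 0 := by
      intro x y hx hy
      have := key_le T x y hx hy
      rw [h0] at this
      exact abs_eq_zero.mp (le_antisymm this (abs_nonneg _))
    intro x y
    by_cases hx0 : x = 0
    · rw [hx0]; exact bform_zero_x T y
    by_cases hy0 : y = 0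
    · rw [hy0]; exact bform_zero_y T x
    have hxs : (0:ℝ) < ∑ i, x i ^ 2 := by
      have : ∃ i, x i ≠ 0 := by
        by_contra hc
        push_neg at hc
        exact hx0 (funext hc)
      obtain ⟨i, hi⟩ := this
      have : (0:ℝ) < x i ^ 2 := by positivity
      exact lt_of_lt_of_le this
        (Finset.single_le_sum (fun j _ => sq_nonneg (x j)) (Finset.mem_univ i))
    have hys : (0:ℝ) < ∑ j, y j ^ 2 := by
      have : ∃ j, y j ≠ 0 := by
        by_contra hc
        push_neg at hc
        exact hy0 (funext hc)
      obtain ⟨j, hj⟩ := this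
      have : (0:ℝ) < y j ^ 2 := by positivity
      exact lt_of_lt_of_le this
        (Finset.single_le_sum (fun i _ => sq_nonneg (y i)) (Finset.mem_univ j))
    set nx := Real.sqrt (∑ i, x i ^ 2) with hnx
    set ny := Real.sqrt (∑ j, y j ^ 2) with hny
    have hnxp : 0 < nx := Real.sqrt_pos.mpr hxs
    have hnyp : 0 < ny := Real.sqrt_pos.mpr hys
    have hux : ∑ i, (nx⁻¹ • x) i ^ 2 = 1 := by
      simp only [Pi.smul_apply, smul_eq_mul, mul_pow, ← Finset.mul_sum]
      rw [hnx, ← Real.sqrt_inv, Real.sq_sqrt (by positivity)]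
      field_simp
    have huy : ∑ j, (ny⁻¹ • y) j ^ 2 = 1 := by
      simp only [Pi.smul_apply, smul_eq_mul, mul_pow, ← Finset.mul_sum]
      rw [hny, ← Real.sqrt_inv, Real.sq_sqrt (by positivity)]
      field_simp
    have hx' : x = nx • (nx⁻¹ • x) := by
      rw [smul_smul, mul_inv_cancel₀ (ne_of_gt hnxp), one_smul]
    have hy' : y = ny • (ny⁻¹ • y) := by
      rw [smul_smul, mul_inv_cancel₀ (ne_of_gt hnyp), one_smul]
    rw [hx', hy', bform_smul_x, bform_smul_y, Hunit _ _ hux huy, mul_zero, mul_zero]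
  refine ⟨fun T hT => ⟨bSpec_nonneg hd1 hd2 T, ⟨hzero T hT, ?_⟩⟩, ?_, ?_⟩
  · -- T = 0 → bSpec T = 0
    rintro rfl
    have hle : bSpec (0 : Fin d1 → Fin d2 → Fin d1 → Fin d2 → ℝ) ≤ 0 := by
      apply Real.sSup_le _ le_rfl
      rintro r ⟨x, y, hx, hy, rfl⟩
      simp [bform]
    exact le_antisymm hle (bSpec_nonneg hd1 hd2 _)
  · -- homogeneity
    intro T _ c
    rcases eq_or_ne c 0 with rfl | hc
    · simp only [abs_zero, zero_mul, zero_smul]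
      have hle : bSpec (0 : Fin d1 → Fin d2 → Fin d1 → Fin d2 → ℝ) ≤ 0 := by
        apply Real.sSup_le _ le_rfl
        rintro r ⟨x, y, hx, hy, rfl⟩
        simp [bform]
      exact le_antisymm hle (bSpec_nonneg hd1 hd2 _)
    · apply le_antisymm
      · apply Real.sSup_le
        · rintro r ⟨x, y, hx, hy, rfl⟩
          rw [bform_smul_T, abs_mul]
          exact mul_le_mul_of_nonneg_left (key_le T x y hx hy) (abs_nonneg c)
        · exact mul_nonneg (abs_nonneg c) (bSpec_nonneg hd1 hd2 T)
      · rw [← le_div_iff₀' (abs_pos.mpr hc)]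
        apply Real.sSup_le
        · rintro r ⟨x, y, hx, hy, rfl⟩
          rw [le_div_iff₀' (abs_pos.mpr hc), ← abs_mul, ← bform_smul_T]
          exact key_le (c • T) x y hx hy
        · exact div_nonneg (bSpec_nonneg hd1 hd2 _) (abs_nonneg c)
  · -- triangle inequality
    intro T S _ _
    apply Real.sSup_le
    · rintro r ⟨x, y, hx, hy, rfl⟩
      rw [bform_add_T]
      calc |bform T x y + bform S x y| ≤ |bform T x y| + |bform S x y| := abs_add_le _ _
        _ ≤ bSpec T + bSpec S := add_le_add (key_le T x y hx hy) (key_le S x y hx hy)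
    · exact add_nonneg (bSpec_nonneg hd1 hd2 T) (bSpec_nonneg hd1 hd2 S)
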